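/- Let {f_i}_{i∈I} be a frame sequence in a Hilbert space H (a frame for its closed linear span) which is ω-independent for ℓ₂-sequences. Then {f_i}_{i∈I} is a Riesz basic sequence: there exist 0 < A ≤ B < ∞ with A Σ|c_i|² ≤ ‖Σ c_i f_i‖² ≤ B Σ|c_i|² for all (c_i) ∈ ℓ²(I). -/

import Mathlib

open scoped InnerProductSpace
open Submodule Topology TopologicalSpace

noncomputable section

variable {H : Type} [NormedAddCommGroup H] [InnerProductSpace ℂ H] [CompleteSpace H]

/-- `f` is a Bessel sequence with bound `B`. -/
def IsBessel {H : Type} [NormedAddCommGroup H] [InnerProductSpace ℂ H]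
    {I : Type} (f : I → H) (B : ℝ) : Prop :=
  ∀ g : H, ∀ s : Finset I, ∑ i ∈ s, ‖⟪g, f i⟫_ℂ‖ ^ 2 ≤ B * ‖g‖ ^ 2

/-- `f` is a Riesz basic sequence (a Riesz basis for its closed span). -/
def IsRieszBasic {H : Type} [NormedAddCommGroup H] [InnerProductSpace ℂ H]
    {I : Type} (f : I → H) : Prop :=
  ∃ A B : ℝ, 0 < A ∧ A ≤ B ∧ ∀ c : I → ℂ, Summable (fun i => ‖c i‖ ^ 2) →
    ∃ v : H, HasSum (fun i => c i • f i) v ∧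
      A * ∑' i, ‖c i‖ ^ 2 ≤ ‖v‖ ^ 2 ∧ ‖v‖ ^ 2 ≤ B * ∑' i, ‖c i‖ ^ 2

/-- `f` is a frame for its closed linear span. -/
def IsFrameSequence {H : Type} [NormedAddCommGroup H] [InnerProductSpace ℂ H]
    {I : Type} (f : I → H) : Prop :=
  ∃ A B : ℝ, 0 < A ∧ A ≤ B ∧
    ∀ g ∈ closure ((span ℂ (Set.range f) : Submodule ℂ H) : Set H),
      Summable (fun i => ‖⟪g, f i⟫_ℂ‖ ^ 2) ∧
      A * ‖g‖ ^ 2 ≤ ∑' i, ‖⟪g, f i⟫_ℂ‖ ^ 2 ∧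
      ∑' i, ‖⟪g, f i⟫_ℂ‖ ^ 2 ≤ B * ‖g‖ ^ 2

/-- `f` is ω-independent for ℓ₂-sequences. -/
def IsOmegaIndep {H : Type} [NormedAddCommGroup H] [InnerProductSpace ℂ H]
    {I : Type} (f : I → H) : Prop :=
  ∀ c : I → ℂ, Summable (fun i => ‖c i‖ ^ 2) →
    HasSum (fun i => c i • f i) 0 → ∀ i, c i = 0

/-- `g` possesses a finite orthogonal decomposition: the index set partitions into
finite sets whose spans are mutually orthogonal. -/
def HasFiniteOrthDecomp {H : Type} [NormedAddCommGroup H] [InnerProductSpace ℂ H]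
    {I : Type} (g : I → H) : Prop :=
  ∃ P : ℕ → Set I, (∀ i, ∃! j, i ∈ P j) ∧ (∀ j, (P j).Finite) ∧
    ∀ j k, j ≠ k → ∀ x ∈ span ℂ (g '' P j), ∀ y ∈ span ℂ (g '' P k), ⟪x, y⟫_ℂ = 0


open scoped ENNReal in
private lemma lp_norm_sq' {I : Type} (u : lp (fun _ : I => ℂ) 2) :
    ‖u‖ ^ 2 = ∑' i, ‖u i‖ ^ 2 := by
  have h := lp.norm_rpow_eq_tsum (p := 2) (by norm_num) u
  rw [show ((2:ℝ≥0∞).toReal) = ((2:ℕ):ℝ) by norm_num] at h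
  simpa [Real.rpow_natCast] using h

open scoped ENNReal in
private lemma memlp_of' {I : Type} (c : I → ℂ) (hs : Summable (fun i => ‖c i‖ ^ 2)) :
    Memℓp c 2 := by
  apply memℓp_gen
  rw [show ((2:ℝ≥0∞).toReal) = ((2:ℕ):ℝ) by norm_num]
  simpa [Real.rpow_natCast] using hs

open scoped ENNReal in
private lemma summable_of_lp' {I : Type} (c : lp (fun _ : I => ℂ) 2) :
    Summable (fun i => ‖c i‖ ^ 2) := by
  have h := lp.memℓp c
  rw [Memℓp, if_neg (by norm_num), if_neg (by norm_num)] at h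
  rw [show ((2:ℝ≥0∞).toReal) = ((2:ℕ):ℝ) by norm_num] at h
  simpa [Real.rpow_natCast] using h

theorem stmt7 [SeparableSpace H] {I : Type} [Countable I] (f : I → H)
    (hfs : IsFrameSequence f) (hω : IsOmegaIndep f) :
    IsRieszBasic f := by
  classical
  obtain ⟨A, B, hA, hAB, hframe⟩ := hfs
  have hB : (0:ℝ) < B := lt_of_lt_of_le hA hAB
  have hsA : 0 < Real.sqrt A := Real.sqrt_pos.2 hA
  set N : Submodule ℂ H := (span ℂ (Set.range f)).topologicalClosure with hNdef
  haveI : CompleteSpace N :=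
    (span ℂ (Set.range f)).isClosed_topologicalClosure.completeSpace_coe
  have hfN : ∀ i, f i ∈ N := fun i =>
    Submodule.le_topologicalClosure _ (subset_span (Set.mem_range_self i))
  have hmemN : ∀ g : N, (g : H) ∈ closure ((span ℂ (Set.range f) : Submodule ℂ H) : Set H) :=
    fun g => g.2
  have hsum : ∀ g : N, Summable (fun i => ‖⟪(g:H), f i⟫_ℂ‖ ^ 2) :=
    fun g => (hframe _ (hmemN g)).1
  have hmeml : ∀ g : N, Memℓp (fun i => ⟪f i, (g:H)⟫_ℂ) 2 := by
    intro g
    apply memlp_of'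
    simpa [norm_inner_symm] using hsum g
  let Ulin : N →ₗ[ℂ] lp (fun _ : I => ℂ) 2 :=
    { toFun := fun g => ⟨fun i => ⟪f i, (g:H)⟫_ℂ, hmeml g⟩
      map_add' := by
        intro x y; apply lp.ext; funext i
        simp [inner_add_right]
        rfl
      map_smul' := by
        intro c x; apply lp.ext; funext i
        simp [inner_smul_right] }
  have hUlinapp : ∀ (g : N) (i : I), (Ulin g : ∀ _ : I, ℂ) i = ⟪f i, (g:H)⟫_ℂ := fun g i => rfl
  have hUlinnormsq : ∀ g : N, ‖Ulin g‖ ^ 2 = ∑' i, ‖⟪(g:H), f i⟫_ℂ‖ ^ 2 := by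
    intro g
    rw [lp_norm_sq']
    congr 1; funext i; rw [hUlinapp, norm_inner_symm]
  have hUbound : ∀ g : N, ‖Ulin g‖ ≤ Real.sqrt B * ‖g‖ := by
    intro g
    have h1 : ‖Ulin g‖ ^ 2 ≤ B * ‖g‖ ^ 2 := by
      rw [hUlinnormsq]
      exact (hframe _ (hmemN g)).2.2
    have h2 := Real.sqrt_le_sqrt h1
    rwa [Real.sqrt_sq (norm_nonneg _), Real.sqrt_mul hB.le, Real.sqrt_sq (norm_nonneg _)] at h2
  set U : N →L[ℂ] lp (fun _ : I => ℂ) 2 := Ulin.mkContinuous (Real.sqrt B) hUbound with hUdef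
  have hUapp : ∀ (g : N) (i : I), (U g : ∀ _ : I, ℂ) i = ⟪f i, (g:H)⟫_ℂ := fun g i => rfl
  have hUnorm : ‖U‖ ≤ Real.sqrt B :=
    Ulin.mkContinuous_norm_le (Real.sqrt_nonneg B) hUbound
  have hUlow : ∀ g : N, Real.sqrt A * ‖g‖ ≤ ‖U g‖ := by
    intro g
    have h1 : A * ‖g‖ ^ 2 ≤ ‖U g‖ ^ 2 := by
      have : ‖U g‖ ^ 2 = ∑' i, ‖⟪(g:H), f i⟫_ℂ‖ ^ 2 := hUlinnormsq g
      rw [this]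
      have := (hframe _ (hmemN g)).2.1
      simpa using this
    have h2 := Real.sqrt_le_sqrt h1
    rwa [Real.sqrt_mul hA.le, Real.sqrt_sq (norm_nonneg _), Real.sqrt_sq (norm_nonneg _)] at h2
  set T : lp (fun _ : I => ℂ) 2 →L[ℂ] N := ContinuousLinearMap.adjoint U with hT
  have hTsingle : ∀ (i : I) (a : ℂ), T (lp.single 2 i a) = a • (⟨f i, hfN i⟩ : N) := by
    intro i a
    apply ext_inner_right ℂ
    intro g
    rw [hT, ContinuousLinearMap.adjoint_inner_left, lp.inner_single_left, hUapp,
      inner_smul_left, Submodule.coe_inner]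
    simp [RCLike.inner_apply]
    ring
  have hTsum : ∀ c : lp (fun _ : I => ℂ) 2,
      HasSum (fun i => c i • (⟨f i, hfN i⟩ : N)) (T c) := by
    intro c
    have h1 : HasSum (fun i => lp.single 2 i (c i)) c :=
      lp.hasSum_single (by norm_num) c
    have h2 := h1.mapL T
    simpa [hTsingle] using h2
  have hTsumH : ∀ c : lp (fun _ : I => ℂ) 2,
      HasSum (fun i => c i • f i) ((T c : N) : H) := by
    intro c
    have h2 := (hTsum c).mapL N.subtypeL
    simpa using h2
  have Tinj : ∀ c : lp (fun _ : I => ℂ) 2, T c = 0 → c = 0 := by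
    intro c hc0
    have h1 := hTsumH c
    rw [hc0] at h1
    simp only [Submodule.coe_zero] at h1
    have h2 := hω (fun i => c i) (summable_of_lp' c) h1
    apply lp.ext; funext i; exact h2 i
  -- range of U
  have hanti : AntilipschitzWith ⟨(Real.sqrt A)⁻¹, by positivity⟩ U := by
    apply ContinuousLinearMap.antilipschitz_of_bound
    intro x
    change ‖x‖ ≤ (Real.sqrt A)⁻¹ * ‖U x‖
    rw [inv_mul_eq_div, le_div_iff₀ hsA]
    calc ‖x‖ * Real.sqrt A = Real.sqrt A * ‖x‖ := mul_comm _ _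
    _ ≤ ‖U x‖ := hUlow x
  have hclosed : IsClosed (Set.range U) := hanti.isClosed_range U.uniformContinuous
  have hclosed' : IsClosed ((LinearMap.range (U : N →ₗ[ℂ] lp (fun _ : I => ℂ) 2) : Submodule ℂ (lp (fun _ : I => ℂ) 2)) :
      Set (lp (fun _ : I => ℂ) 2)) := by
    convert hclosed using 1
    exact LinearMap.coe_range _
  have horth : (LinearMap.range (U : N →ₗ[ℂ] lp (fun _ : I => ℂ) 2))ᗮ = ⊥ := by
    rw [Submodule.eq_bot_iff]
    intro c hc
    apply Tinj
    have h0 : ∀ g : N, ⟪(g : N), T c⟫_ℂ = 0 := by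
      intro g
      rw [hT, ContinuousLinearMap.adjoint_inner_right]
      exact (Submodule.mem_orthogonal _ _).1 hc _ (LinearMap.mem_range_self _ g)
    have := h0 (T c)
    rwa [inner_self_eq_zero] at this
  have hrange : LinearMap.range (U : N →ₗ[ℂ] lp (fun _ : I => ℂ) 2) = ⊤ := by
    have h1 := (Submodule.topologicalClosure_eq_top_iff
      (K := LinearMap.range (U : N →ₗ[ℂ] lp (fun _ : I => ℂ) 2))).2 horth
    rwa [IsClosed.submodule_topologicalClosure_eq hclosed'] at h1
  have hsurj : Function.Surjective U := LinearMap.range_eq_top.1 hrange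
  -- lower bound for T
  have hTlow : ∀ c : lp (fun _ : I => ℂ) 2, A * ‖c‖ ^ 2 ≤ ‖T c‖ ^ 2 := by
    intro c
    by_cases hc0 : c = 0
    · simp [hc0]
    obtain ⟨g, hg⟩ := hsurj c
    have hcpos : 0 < ‖c‖ := norm_pos_iff.2 hc0
    have h1 : Real.sqrt A * ‖g‖ ≤ ‖c‖ := by rw [← hg]; exact hUlow g
    have hip : ⟪T c, g⟫_ℂ = ⟪c, c⟫_ℂ := by
      rw [hT, ContinuousLinearMap.adjoint_inner_left, hg]
    have h2 : ‖c‖ ^ 2 ≤ ‖T c‖ * ‖g‖ := by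
      calc (‖c‖ ^ 2 : ℝ) = RCLike.re ⟪c, c⟫_ℂ := (inner_self_eq_norm_sq (𝕜 := ℂ) c).symm
      _ = RCLike.re ⟪T c, g⟫_ℂ := by rw [hip]
      _ ≤ ‖⟪T c, g⟫_ℂ‖ := RCLike.re_le_norm _
      _ ≤ ‖T c‖ * ‖g‖ := norm_inner_le_norm _ _
    have h3 : Real.sqrt A * ‖c‖ ≤ ‖T c‖ := by
      have h4 : (Real.sqrt A * ‖c‖) * ‖c‖ ≤ ‖T c‖ * ‖c‖ := by
        calc (Real.sqrt A * ‖c‖) * ‖c‖ = Real.sqrt A * ‖c‖ ^ 2 := by ring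
        _ ≤ Real.sqrt A * (‖T c‖ * ‖g‖) := mul_le_mul_of_nonneg_left h2 hsA.le
        _ = ‖T c‖ * (Real.sqrt A * ‖g‖) := by ring
        _ ≤ ‖T c‖ * ‖c‖ := mul_le_mul_of_nonneg_left h1 (norm_nonneg _)
      exact le_of_mul_le_mul_right h4 hcpos
    calc A * ‖c‖ ^ 2 = (Real.sqrt A * ‖c‖) ^ 2 := by
          rw [mul_pow, Real.sq_sqrt hA.le]
    _ ≤ ‖T c‖ ^ 2 := by
          apply pow_le_pow_left₀ (by positivity) h3
  -- upper bound for T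
  have hTnorm : ‖T‖ ≤ Real.sqrt B := by
    rw [hT]
    calc ‖ContinuousLinearMap.adjoint U‖ = ‖U‖ :=
          LinearIsometryEquiv.norm_map ContinuousLinearMap.adjoint U
    _ ≤ Real.sqrt B := hUnorm
  -- conclusion
  refine ⟨A, B, hA, hAB, ?_⟩
  intro c hs
  set clp : lp (fun _ : I => ℂ) 2 := ⟨c, memlp_of' c hs⟩ with hclp
  have happ : ∀ i, (clp : ∀ _ : I, ℂ) i = c i := fun i => rfl
  have htsum : ∑' i, ‖c i‖ ^ 2 = ‖clp‖ ^ 2 := (lp_norm_sq' clp).symm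
  refine ⟨((T clp : N) : H), ?_, ?_, ?_⟩
  · have := hTsumH clp
    simpa [happ] using this
  · rw [htsum]
    have := hTlow clp
    simpa using this
  · rw [htsum]
    have h1 : ‖T clp‖ ≤ Real.sqrt B * ‖clp‖ :=
      le_trans (T.le_opNorm clp) (mul_le_mul_of_nonneg_right hTnorm (norm_nonneg _))
    have h2 : ‖T clp‖ ^ 2 ≤ (Real.sqrt B * ‖clp‖) ^ 2 :=
      pow_le_pow_left₀ (norm_nonneg _) h1 2
    rw [mul_pow, Real.sq_sqrt hB.le] at h2
    exact h2
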